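/- The sequence R defined by R(0)=0, R(1)=1, and n·R(n) = R(n-2) + (n-1)·R(n-1) for n ≥ 2 satisfies the closed form R(n) = 1 − Σ_{k=0}^{n} (−1)^k / k! for all n ≥ 0. -/
import Mathlib


theorem stmt_1 (R : ℕ → ℚ) (h0 : R 0 = 0) (h1 : R 1 = 1)
    (hrec : ∀ n : ℕ, 2 ≤ n → (n : ℚ) * R n = R (n - 2) + ((n : ℚ) - 1) * R (n - 1)) :
    ∀ n, R n = 1 - ∑ k ∈ Finset.range (n + 1), (-1 : ℚ) ^ k / (Nat.factorial k : ℚ) := by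
  intro n
  induction n using Nat.strong_induction_on with
  | _ n ih =>
    match n with
    | 0 => simpa using h0
    | 1 =>
      rw [h1]
      simp [Finset.sum_range_succ]
    | (m + 2) =>
      have hm : R m = 1 - ∑ k ∈ Finset.range (m + 1), (-1 : ℚ) ^ k / (Nat.factorial k : ℚ) :=
        ih m (by omega)
      have hm1 : R (m + 1) = 1 - ∑ k ∈ Finset.range (m + 2), (-1 : ℚ) ^ k / (Nat.factorial k : ℚ) :=
        ih (m + 1) (by omega)
      have h := hrec (m + 2) (by omega)
      simp only [Nat.add_sub_cancel, show m + 2 - 2 = m by omega, show m + 2 - 1 = m + 1 by omega] at h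
      have hcast : ((m + 2 : ℕ) : ℚ) = (m : ℚ) + 2 := by push_cast; ring
      rw [hcast, hm, hm1] at h
      have hpos : ((m : ℚ) + 2) ≠ 0 := by positivity
      have hR : R (m + 2) = ((1 - ∑ k ∈ Finset.range (m + 1), (-1 : ℚ) ^ k / (Nat.factorial k : ℚ)) + ((m : ℚ) + 2 - 1) * (1 - ∑ k ∈ Finset.range (m + 2), (-1 : ℚ) ^ k / (Nat.factorial k : ℚ))) / ((m : ℚ) + 2) := by
        field_simp
        linarith [h]
      rw [hR]
      rw [Finset.sum_range_succ ((fun k => (-1 : ℚ) ^ k / (Nat.factorial k : ℚ))) (m + 2),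
        Finset.sum_range_succ ((fun k => (-1 : ℚ) ^ k / (Nat.factorial k : ℚ))) (m + 1)]
      have hf1 : ((Nat.factorial (m + 1) : ℕ) : ℚ) ≠ 0 := by
        exact_mod_cast Nat.factorial_ne_zero (m + 1)
      have hf2 : ((Nat.factorial (m + 2) : ℕ) : ℚ) = ((m : ℚ) + 2) * ((Nat.factorial (m + 1) : ℕ) : ℚ) := by
        rw [Nat.factorial_succ]; push_cast; ring
      rw [hf2]
      have hpow : (-1 : ℚ) ^ (m + 2) = (-1 : ℚ) ^ (m + 1) * (-1) := by ring
      rw [hpow]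
      field_simp
      ring
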